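/- Let τ ∈ (0,1), n ≥ 1, T ∈ ℝ, let Y₁,…,Y_n be real numbers, and define φ(c) = Σ_{i=1}^{n} ρ_τ(Y_i − c) − c·T for c ∈ ℝ. Then a real number c minimizes φ over ℝ if and only if Σ_{i=1}^{n} 1{Y_i < c} ≤ n·τ + T ≤ Σ_{i=1}^{n} 1{Y_i ≤ c}. Moreover, if n·τ + T is not an integer and the Y_i are distinct, then any two minimizers take the same value, namely the h-th order statistic of Y₁,…,Y_n with h = ⌈n·τ + T⌉, provided 0 < n·τ + T < n. -/

import Mathlib

/-- The check function `ρ_τ(u) = u (τ - 1{u ≤ 0})`. -/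
noncomputable def checkFun (τ u : ℝ) : ℝ := u * (τ - if u ≤ 0 then 1 else 0)

lemma clA (τ Y c c' : ℝ) (h : c ≤ c') :
    (c' - c) * ((if Y ≤ c then (1:ℝ) else 0) - τ) ≤ checkFun τ (Y - c') - checkFun τ (Y - c) := by
  unfold checkFun; split_ifs <;> nlinarith

lemma clB (τ Y c c' : ℝ) (h : c' ≤ c) :
    (c' - c) * ((if Y < c then (1:ℝ) else 0) - τ) ≤ checkFun τ (Y - c') - checkFun τ (Y - c) := by
  unfold checkFun; split_ifs <;> nlinarith

lemma ltA (τ Y c c' : ℝ) (h : c ≤ c') (hY : Y ≤ c ∨ c' < Y) :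
    checkFun τ (Y - c') - checkFun τ (Y - c) ≤ (c' - c) * ((if Y ≤ c then (1:ℝ) else 0) - τ) := by
  unfold checkFun; rcases hY with hY | hY <;> split_ifs <;> nlinarith

lemma ltB (τ Y c c' : ℝ) (h : c' ≤ c) (hY : Y < c' ∨ c ≤ Y) :
    checkFun τ (Y - c') - checkFun τ (Y - c) ≤ (c' - c) * ((if Y < c then (1:ℝ) else 0) - τ) := by
  unfold checkFun; rcases hY with hY | hY <;> split_ifs <;> nlinarith

lemma sumA (τ T : ℝ) {n : ℕ} (Y : Fin n → ℝ) (c c' : ℝ) (h : c ≤ c') :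
    (c' - c) * ((∑ i, if Y i ≤ c then (1:ℝ) else 0) - ((n : ℝ) * τ + T)) ≤
      ((∑ i, checkFun τ (Y i - c')) - c' * T) - ((∑ i, checkFun τ (Y i - c)) - c * T) := by
  have key : ∑ i, (c' - c) * ((if Y i ≤ c then (1:ℝ) else 0) - τ) ≤
      ∑ i, (checkFun τ (Y i - c') - checkFun τ (Y i - c)) :=
    Finset.sum_le_sum fun i _ => clA τ (Y i) c c' h
  have e1 : ∑ i, (c' - c) * ((if Y i ≤ c then (1:ℝ) else 0) - τ)
      = (c' - c) * ((∑ i, if Y i ≤ c then (1:ℝ) else 0) - (n : ℝ) * τ) := by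
    rw [← Finset.mul_sum]
    congr 1
    rw [Finset.sum_sub_distrib, Finset.sum_const, Finset.card_univ]
    simp [nsmul_eq_mul]
  have e2 : ∑ i, (checkFun τ (Y i - c') - checkFun τ (Y i - c))
      = (∑ i, checkFun τ (Y i - c')) - ∑ i, checkFun τ (Y i - c) := Finset.sum_sub_distrib _ _
  rw [e1, e2] at key
  nlinarith [key]

lemma sumB (τ T : ℝ) {n : ℕ} (Y : Fin n → ℝ) (c c' : ℝ) (h : c' ≤ c) :
    (c' - c) * ((∑ i, if Y i < c then (1:ℝ) else 0) - ((n : ℝ) * τ + T)) ≤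
      ((∑ i, checkFun τ (Y i - c')) - c' * T) - ((∑ i, checkFun τ (Y i - c)) - c * T) := by
  have key : ∑ i, (c' - c) * ((if Y i < c then (1:ℝ) else 0) - τ) ≤
      ∑ i, (checkFun τ (Y i - c') - checkFun τ (Y i - c)) :=
    Finset.sum_le_sum fun i _ => clB τ (Y i) c c' h
  have e1 : ∑ i, (c' - c) * ((if Y i < c then (1:ℝ) else 0) - τ)
      = (c' - c) * ((∑ i, if Y i < c then (1:ℝ) else 0) - (n : ℝ) * τ) := by
    rw [← Finset.mul_sum]
    congr 1
    rw [Finset.sum_sub_distrib, Finset.sum_const, Finset.card_univ]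
    simp [nsmul_eq_mul]
  have e2 : ∑ i, (checkFun τ (Y i - c') - checkFun τ (Y i - c))
      = (∑ i, checkFun τ (Y i - c')) - ∑ i, checkFun τ (Y i - c) := Finset.sum_sub_distrib _ _
  rw [e1, e2] at key
  nlinarith [key]

lemma sumA' (τ T : ℝ) {n : ℕ} (Y : Fin n → ℝ) (c c' : ℝ) (h : c ≤ c')
    (hY : ∀ i, Y i ≤ c ∨ c' < Y i) :
    ((∑ i, checkFun τ (Y i - c')) - c' * T) - ((∑ i, checkFun τ (Y i - c)) - c * T) ≤
      (c' - c) * ((∑ i, if Y i ≤ c then (1:ℝ) else 0) - ((n : ℝ) * τ + T)) := by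
  have key : ∑ i, (checkFun τ (Y i - c') - checkFun τ (Y i - c)) ≤
      ∑ i, (c' - c) * ((if Y i ≤ c then (1:ℝ) else 0) - τ) :=
    Finset.sum_le_sum fun i _ => ltA τ (Y i) c c' h (hY i)
  have e1 : ∑ i, (c' - c) * ((if Y i ≤ c then (1:ℝ) else 0) - τ)
      = (c' - c) * ((∑ i, if Y i ≤ c then (1:ℝ) else 0) - (n : ℝ) * τ) := by
    rw [← Finset.mul_sum]
    congr 1
    rw [Finset.sum_sub_distrib, Finset.sum_const, Finset.card_univ]
    simp [nsmul_eq_mul]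
  have e2 : ∑ i, (checkFun τ (Y i - c') - checkFun τ (Y i - c))
      = (∑ i, checkFun τ (Y i - c')) - ∑ i, checkFun τ (Y i - c) := Finset.sum_sub_distrib _ _
  rw [e1, e2] at key
  nlinarith [key]

lemma sumB' (τ T : ℝ) {n : ℕ} (Y : Fin n → ℝ) (c c' : ℝ) (h : c' ≤ c)
    (hY : ∀ i, Y i < c' ∨ c ≤ Y i) :
    ((∑ i, checkFun τ (Y i - c')) - c' * T) - ((∑ i, checkFun τ (Y i - c)) - c * T) ≤
      (c' - c) * ((∑ i, if Y i < c then (1:ℝ) else 0) - ((n : ℝ) * τ + T)) := by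
  have key : ∑ i, (checkFun τ (Y i - c') - checkFun τ (Y i - c)) ≤
      ∑ i, (c' - c) * ((if Y i < c then (1:ℝ) else 0) - τ) :=
    Finset.sum_le_sum fun i _ => ltB τ (Y i) c c' h (hY i)
  have e1 : ∑ i, (c' - c) * ((if Y i < c then (1:ℝ) else 0) - τ)
      = (c' - c) * ((∑ i, if Y i < c then (1:ℝ) else 0) - (n : ℝ) * τ) := by
    rw [← Finset.mul_sum]
    congr 1
    rw [Finset.sum_sub_distrib, Finset.sum_const, Finset.card_univ]
    simp [nsmul_eq_mul]
  have e2 : ∑ i, (checkFun τ (Y i - c') - checkFun τ (Y i - c))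
      = (∑ i, checkFun τ (Y i - c')) - ∑ i, checkFun τ (Y i - c) := Finset.sum_sub_distrib _ _
  rw [e1, e2] at key
  nlinarith [key]

lemma part1 (τ T : ℝ) {n : ℕ} (Y : Fin n → ℝ) (c : ℝ) :
    (∀ c' : ℝ,
        (∑ i, checkFun τ (Y i - c)) - c * T ≤ (∑ i, checkFun τ (Y i - c')) - c' * T)
      ↔ ((∑ i, (if Y i < c then (1 : ℝ) else 0)) ≤ n * τ + T
          ∧ (n : ℝ) * τ + T ≤ ∑ i, (if Y i ≤ c then (1 : ℝ) else 0)) := by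
  constructor
  · intro hmin
    constructor
    · -- left perturbation
      obtain ⟨c', hc', hsep⟩ : ∃ c', c' < c ∧ ∀ i, Y i < c' ∨ c ≤ Y i := by
        by_cases hne : (Finset.univ.filter (fun i => Y i < c)).Nonempty
        · refine ⟨(c + (Finset.univ.filter (fun i => Y i < c)).sup' hne Y) / 2, ?_, ?_⟩
          · have hlt : (Finset.univ.filter (fun i => Y i < c)).sup' hne Y < c :=
              (Finset.sup'_lt_iff hne).mpr fun i hi => (Finset.mem_filter.mp hi).2
            linarith
          · intro i
            rcases lt_or_ge (Y i) c with h | h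
            · left
              have h2 : Y i ≤ (Finset.univ.filter (fun i => Y i < c)).sup' hne Y :=
                Finset.le_sup' Y (Finset.mem_filter.mpr ⟨Finset.mem_univ i, h⟩)
              have hlt : (Finset.univ.filter (fun i => Y i < c)).sup' hne Y < c :=
                (Finset.sup'_lt_iff hne).mpr fun i hi => (Finset.mem_filter.mp hi).2
              linarith
            · right; exact h
        · refine ⟨c - 1, by linarith, fun i => ?_⟩
          right
          by_contra h
          exact hne ⟨i, Finset.mem_filter.mpr ⟨Finset.mem_univ i, not_le.mp h⟩⟩
      have h1 := sumB' τ T Y c c' hc'.le hsep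
      have h2 := hmin c'
      nlinarith [h1, h2, hc']
    · -- right perturbation
      obtain ⟨c', hc', hsep⟩ : ∃ c', c < c' ∧ ∀ i, Y i ≤ c ∨ c' < Y i := by
        by_cases hne : (Finset.univ.filter (fun i => c < Y i)).Nonempty
        · refine ⟨(c + (Finset.univ.filter (fun i => c < Y i)).inf' hne Y) / 2, ?_, ?_⟩
          · have hlt : c < (Finset.univ.filter (fun i => c < Y i)).inf' hne Y :=
              (Finset.lt_inf'_iff hne).mpr fun i hi => (Finset.mem_filter.mp hi).2
            linarith
          · intro i
            rcases le_or_gt (Y i) c with h | h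
            · left; exact h
            · right
              have h2 : (Finset.univ.filter (fun i => c < Y i)).inf' hne Y ≤ Y i :=
                Finset.inf'_le Y (Finset.mem_filter.mpr ⟨Finset.mem_univ i, h⟩)
              have hlt : c < (Finset.univ.filter (fun i => c < Y i)).inf' hne Y :=
                (Finset.lt_inf'_iff hne).mpr fun i hi => (Finset.mem_filter.mp hi).2
              linarith
        · refine ⟨c + 1, by linarith, fun i => ?_⟩
          left
          by_contra h
          exact hne ⟨i, Finset.mem_filter.mpr ⟨Finset.mem_univ i, not_le.mp h⟩⟩
      have h1 := sumA' τ T Y c c' hc'.le hsep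
      have h2 := hmin c'
      nlinarith [h1, h2, hc']
  · rintro ⟨hL, hR⟩ c'
    rcases le_total c c' with h | h
    · have h1 := sumA τ T Y c c' h
      have h2 : (0:ℝ) ≤ (c' - c) * ((∑ i, if Y i ≤ c then (1:ℝ) else 0) - ((n : ℝ) * τ + T)) :=
        mul_nonneg (by linarith) (by linarith)
      linarith
    · have h1 := sumB τ T Y c c' h
      have h2 : (0:ℝ) ≤ (c' - c) * ((∑ i, if Y i < c then (1:ℝ) else 0) - ((n : ℝ) * τ + T)) :=
        mul_nonneg_of_nonpos_of_nonpos (by linarith) (by linarith)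
      linarith


lemma part2ex (τ T : ℝ) {n : ℕ} (Y : Fin n → ℝ)
    (hni : ∀ m : ℤ, (n : ℝ) * τ + T ≠ (m : ℝ)) (hinj : Function.Injective Y)
    (c : ℝ)
    (hL : (∑ i, (if Y i < c then (1 : ℝ) else 0)) ≤ n * τ + T)
    (hR : (n : ℝ) * τ + T ≤ ∑ i, (if Y i ≤ c then (1 : ℝ) else 0)) :
    ∃ i : Fin n, c = Y i ∧
      ((Finset.univ.filter (fun j => Y j ≤ Y i)).card : ℤ) = ⌈(n : ℝ) * τ + T⌉ := by
  set a := (n : ℝ) * τ + T with ha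
  set Llt := Finset.univ.filter (fun j => Y j < c) with hLdef
  set Rle := Finset.univ.filter (fun j => Y j ≤ c) with hRdef
  set E := Finset.univ.filter (fun j => Y j = c) with hEdef
  have hLsum : (∑ i, (if Y i < c then (1 : ℝ) else 0)) = (Llt.card : ℝ) := by
    rw [Finset.sum_boole, hLdef]
  have hRsum : (∑ i, (if Y i ≤ c then (1 : ℝ) else 0)) = (Rle.card : ℝ) := by
    rw [Finset.sum_boole, hRdef]
  have hceil : (⌈a⌉ : ℤ) ≤ (Rle.card : ℤ) := by
    refine Int.ceil_le.mpr ?_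
    rw [hRsum] at hR
    exact_mod_cast hR
  have hLceil : ((Llt.card : ℕ) : ℤ) < ⌈a⌉ := by
    refine Int.lt_ceil.mpr ?_
    rw [hLsum] at hL
    refine lt_of_le_of_ne (by exact_mod_cast hL) fun hh => hni (Llt.card : ℤ) ?_
    exact_mod_cast hh.symm
  have hsplit : Rle = Llt ∪ E := by
    ext j
    simp only [hRdef, hLdef, hEdef, Finset.mem_union, Finset.mem_filter, Finset.mem_univ,
      true_and]
    exact le_iff_lt_or_eq
  have hdisj : Disjoint Llt E := by
    rw [Finset.disjoint_left]
    intro j hj hj'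
    rw [hLdef, Finset.mem_filter] at hj
    rw [hEdef, Finset.mem_filter] at hj'
    exact absurd hj'.2 (ne_of_lt hj.2)
  have hcard : Rle.card = Llt.card + E.card := by
    rw [hsplit]; exact Finset.card_union_of_disjoint hdisj
  have hE1 : E.card ≤ 1 := by
    refine Finset.card_le_one.mpr fun i hi j hj => hinj ?_
    rw [hEdef, Finset.mem_filter] at hi hj
    rw [hi.2, hj.2]
  have hEeq : E.card = 1 := by omega
  have hReq : (Rle.card : ℤ) = ⌈a⌉ := by omega
  obtain ⟨i, hi⟩ := Finset.card_eq_one.mp hEeq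
  have hYi : Y i = c := by
    have hmem : i ∈ E := hi ▸ Finset.mem_singleton_self i
    rw [hEdef, Finset.mem_filter] at hmem
    exact hmem.2
  refine ⟨i, hYi.symm, ?_⟩
  have hfe : Finset.univ.filter (fun j => Y j ≤ Y i) = Rle := by rw [hYi]
  rw [hfe]
  exact hReq

lemma uniqLem {n : ℕ} (Y : Fin n → ℝ) (c c' : ℝ) (h : c ≤ c') (i i' : Fin n)
    (hci : c = Y i) (hci' : c' = Y i')
    (hc : (Finset.univ.filter (fun j => Y j ≤ Y i)).card
        = (Finset.univ.filter (fun j => Y j ≤ Y i')).card) : c = c' := by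
  have hii : Y i ≤ Y i' := by rw [← hci, ← hci']; exact h
  have hsub : Finset.univ.filter (fun j => Y j ≤ Y i) ⊆ Finset.univ.filter (fun j => Y j ≤ Y i') :=
    by
    intro j hj
    rw [Finset.mem_filter] at hj ⊢
    exact ⟨hj.1, le_trans hj.2 hii⟩
  have heq := Finset.eq_of_subset_of_card_le hsub (le_of_eq hc.symm)
  have hmem : i' ∈ Finset.univ.filter (fun j => Y j ≤ Y i') := by simp
  rw [← heq, Finset.mem_filter] at hmem
  rw [hci, hci']
  exact le_antisymm hii hmem.2

/-- Sub-gradient characterization for the gradient-bootstrap perturbed quantile objective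
`φ(c) = Σᵢ ρ_τ(Yᵢ − c) − c T`: `c` is a minimizer iff
`Σᵢ 1{Yᵢ < c} ≤ nτ + T ≤ Σᵢ 1{Yᵢ ≤ c}`. Moreover, if `nτ + T` is not an integer, the `Yᵢ`
are distinct and `0 < nτ + T < n`, then any two minimizers coincide and equal the `h`-th
order statistic of the `Yᵢ` with `h = ⌈nτ + T⌉`. -/
theorem gradient_bootstrap_subgradient (τ : ℝ) (hτ : τ ∈ Set.Ioo (0 : ℝ) 1)
    (n : ℕ) (hn : 1 ≤ n) (T : ℝ) (Y : Fin n → ℝ) :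
    (∀ c : ℝ,
      (∀ c' : ℝ,
          (∑ i, checkFun τ (Y i - c)) - c * T ≤ (∑ i, checkFun τ (Y i - c')) - c' * T)
        ↔ ((∑ i, (if Y i < c then (1 : ℝ) else 0)) ≤ n * τ + T
            ∧ (n : ℝ) * τ + T ≤ ∑ i, (if Y i ≤ c then (1 : ℝ) else 0)))
    ∧ ((∀ m : ℤ, (n : ℝ) * τ + T ≠ (m : ℝ)) → Function.Injective Y →
        0 < (n : ℝ) * τ + T → (n : ℝ) * τ + T < n →
        (∀ c c' : ℝ,
          (∀ c'' : ℝ,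
            (∑ i, checkFun τ (Y i - c)) - c * T ≤ (∑ i, checkFun τ (Y i - c'')) - c'' * T) →
          (∀ c'' : ℝ,
            (∑ i, checkFun τ (Y i - c')) - c' * T ≤ (∑ i, checkFun τ (Y i - c'')) - c'' * T) →
          c = c')
        ∧ (∀ c : ℝ,
          (∀ c'' : ℝ,
            (∑ i, checkFun τ (Y i - c)) - c * T ≤ (∑ i, checkFun τ (Y i - c'')) - c'' * T) →
          ∃ i : Fin n, c = Y i ∧
            ((Finset.univ.filter (fun j => Y j ≤ Y i)).card : ℤ) = ⌈(n : ℝ) * τ + T⌉)) := by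
  refine ⟨fun c => part1 τ T Y c, fun hni hinj _ _ => ?_⟩
  have hex : ∀ c : ℝ,
      (∀ c'' : ℝ,
        (∑ i, checkFun τ (Y i - c)) - c * T ≤ (∑ i, checkFun τ (Y i - c'')) - c'' * T) →
      ∃ i : Fin n, c = Y i ∧
        ((Finset.univ.filter (fun j => Y j ≤ Y i)).card : ℤ) = ⌈(n : ℝ) * τ + T⌉ := by
    intro c hmin
    obtain ⟨hL, hR⟩ := (part1 τ T Y c).mp hmin
    exact part2ex τ T Y hni hinj c hL hR
  refine ⟨?_, hex⟩
  intro c c' hm hm'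
  obtain ⟨i, hci, hcard⟩ := hex c hm
  obtain ⟨i', hci', hcard'⟩ := hex c' hm'
  have hcc : (Finset.univ.filter (fun j => Y j ≤ Y i)).card
      = (Finset.univ.filter (fun j => Y j ≤ Y i')).card := by
    exact_mod_cast hcard.trans hcard'.symm
  rcases le_total c c' with h | h
  · exact uniqLem Y c c' h i i' hci hci' hcc
  · exact (uniqLem Y c' c h i' i hci' hci hcc.symm).symm
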